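/- arXiv:1801.10552 — 3 statements merged into one kernel-verified Lean document; each statement's English description precedes it below -/
import Mathlib

section
/- Let X and Y be random variables taking values in measurable spaces 𝒳 and 𝒴 respectively, let M ≥ 2 be an integer, and let X̄₁, …, X̄_{M−1} be i.i.d. random variables each distributed as X and jointly independent of the pair (X, Y). Let q : 𝒳 × 𝒴 → (0, ∞) be a jointly measurable decoding metric and fix s ≥ 0, and assume g(y) := ∫_𝒳 q(x̄, y)^s dP_X(x̄) is finite for P_Y-almost every y, where P_X and P_Y are the laws of X and Y. Then Pr[∃ m ∈ {1, …, M−1} : q(X̄_m, Y) ≥ q(X, Y)] ≤ E[ exp( − max{0, log( q(X, Y)^s / g(Y) ) − log(M−1)} ) ]. -/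
open MeasureTheory ProbabilityTheory

/-- The random-coding union bound with parameter `s` (RCUs bound), probabilistic form:
the probability that at least one of the `M - 1` i.i.d. alternative codewords
`X̄₁, …, X̄_{M-1}` (each distributed as `X` and jointly independent of `(X, Y)`) achieves a
decoding metric at least as large as that of the transmitted codeword `X` is bounded by
`E[exp(−[i_s(X,Y) − log(M−1)]⁺)]`, where
`i_s(x,y) = log(q(x,y)^s / ∫ q(x̄,y)^s dP_X(x̄))` is the generalized information density. -/
theorem rcus_bound_probabilistic_form
    {Ω 𝒳 𝒴 : Type*} [MeasurableSpace Ω] [MeasurableSpace 𝒳] [MeasurableSpace 𝒴]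
    (μ : Measure Ω) [IsProbabilityMeasure μ]
    (X : Ω → 𝒳) (Y : Ω → 𝒴) (hX : Measurable X) (hY : Measurable Y)
    (M : ℕ) (hM : 2 ≤ M)
    (Xbar : Fin (M - 1) → Ω → 𝒳) (hXbarMeas : ∀ m, Measurable (Xbar m))
    (hIdent : ∀ m, IdentDistrib (Xbar m) X μ μ)
    (hIndepFam : iIndepFun Xbar μ)
    (hIndepXY : IndepFun (fun ω m => Xbar m ω) (fun ω => (X ω, Y ω)) μ)
    (q : 𝒳 → 𝒴 → ℝ) (hq : Measurable fun p : 𝒳 × 𝒴 => q p.1 p.2)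
    (hqpos : ∀ x y, 0 < q x y)
    (s : ℝ) (hs : 0 ≤ s)
    (g : 𝒴 → ℝ) (hg : ∀ y, g y = ∫ x, q x y ^ s ∂(μ.map X))
    (hgfin : ∀ᵐ y ∂(μ.map Y), Integrable (fun x => q x y ^ s) (μ.map X)) :
    (μ {ω | ∃ m : Fin (M - 1), q (Xbar m ω) (Y ω) ≥ q (X ω) (Y ω)}).toReal ≤
      ∫ ω, Real.exp
        (-(max 0 (Real.log (q (X ω) (Y ω) ^ s / g (Y ω)) - Real.log ((M : ℝ) - 1)))) ∂μ := by
  classical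
  have hM1 : (1:ℝ) ≤ (M:ℝ) - 1 := by
    have : (2:ℝ) ≤ (M:ℝ) := by exact_mod_cast hM
    linarith
  have hMcast : ((M - 1 : ℕ) : ℝ) = (M:ℝ) - 1 := by
    have h1 : 1 ≤ M := by omega
    push_cast [Nat.cast_sub h1]
    ring
  set PX := μ.map X with hPXdef
  haveI : IsProbabilityMeasure PX := Measure.isProbabilityMeasure_map hX.aemeasurable
  set Z : Ω → (Fin (M-1) → 𝒳) := fun ω m => Xbar m ω with hZdef
  have hZ : Measurable Z := measurable_pi_lambda _ hXbarMeas
  set W : Ω → 𝒳 × 𝒴 := fun ω => (X ω, Y ω) with hWdef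
  have hW : Measurable W := hX.prodMk hY
  set PZ := μ.map Z with hPZdef
  set PW := μ.map W with hPWdef
  haveI : IsProbabilityMeasure PZ := Measure.isProbabilityMeasure_map hZ.aemeasurable
  haveI : IsProbabilityMeasure PW := Measure.isProbabilityMeasure_map hW.aemeasurable
  -- the exponential bound as a function of (x, y)
  set f : 𝒳 × 𝒴 → ℝ := fun p =>
    Real.exp (-(max 0 (Real.log (q p.1 p.2 ^ s / g p.2) - Real.log ((M:ℝ)-1)))) with hfdef
  have hqs : Measurable fun p : 𝒳 × 𝒴 => q p.1 p.2 ^ s := hq.pow measurable_const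
  have hgm : Measurable g := by
    have hgfun : g = fun y => ∫ x, q x y ^ s ∂PX := funext hg
    have hF : StronglyMeasurable fun p : 𝒴 × 𝒳 => q p.2 p.1 ^ s :=
      ((hq.comp measurable_swap).pow measurable_const).stronglyMeasurable
    rw [hgfun]
    exact hF.integral_prod_right'.measurable
  have hfm : Measurable f := by
    apply Real.measurable_exp.comp
    apply Measurable.neg
    apply Measurable.max measurable_const
    exact ((hqs.div (hgm.comp measurable_snd)).log).sub measurable_const
  have hfpos : ∀ p, 0 < f p := fun p => Real.exp_pos _
  have hfle1 : ∀ p, f p ≤ 1 := by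
    intro p
    rw [hfdef]
    apply Real.exp_le_one_iff.mpr
    simp [le_max_left]
  have hfint : Integrable (fun ω => f (W ω)) μ := by
    refine Integrable.mono' (integrable_const 1) (hfm.comp hW).aestronglyMeasurable ?_
    filter_upwards with ω
    rw [Real.norm_eq_abs, abs_of_pos (hfpos _)]
    exact hfle1 _
  -- the error event as a product set
  set S : Set ((𝒳 × 𝒴) × (Fin (M-1) → 𝒳)) :=
    {p | ∃ m, q p.1.1 p.1.2 ≤ q (p.2 m) p.1.2} with hSdef
  have hSm : MeasurableSet S := by
    have hrw : S = ⋃ m, {p : (𝒳×𝒴)×(Fin (M-1)→𝒳) | q p.1.1 p.1.2 ≤ q (p.2 m) p.1.2} := by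
      ext p; simp [hSdef]
    rw [hrw]
    refine MeasurableSet.iUnion fun m => ?_
    have h2 : Measurable fun p : (𝒳 × 𝒴) × (Fin (M-1) → 𝒳) => (p.2 m, p.1.2) :=
      ((measurable_pi_apply m).comp measurable_snd).prodMk
        (measurable_snd.comp measurable_fst)
    exact measurableSet_le (hq.comp measurable_fst) (hq.comp h2)
  have hA : {ω | ∃ m : Fin (M-1), q (Xbar m ω) (Y ω) ≥ q (X ω) (Y ω)}
      = (fun ω => (W ω, Z ω)) ⁻¹' S := rfl
  have hmap : μ.map (fun ω => (W ω, Z ω)) = PW.prod PZ :=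
    (indepFun_iff_map_prod_eq_prod_map_map hW.aemeasurable hZ.aemeasurable).mp hIndepXY.symm
  have hsec : Measurable fun w : 𝒳×𝒴 => PZ (Prod.mk w ⁻¹' S) :=
    measurable_measure_prodMk_left hSm
  have hμA : μ ((fun ω => (W ω, Z ω)) ⁻¹' S) = ∫⁻ ω, PZ (Prod.mk (W ω) ⁻¹' S) ∂μ := by
    rw [← Measure.map_apply (hW.prodMk hZ) hSm, hmap, Measure.prod_apply hSm,
      ← lintegral_map hsec hW]
  have haeInt : ∀ᵐ ω ∂μ, Integrable (fun x => q x (Y ω) ^ s) PX :=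
    ae_of_ae_map hY.aemeasurable hgfin
  -- key pointwise bound
  have key : ∀ x y, Integrable (fun x' => q x' y ^ s) PX →
      PZ (Prod.mk (x, y) ⁻¹' S) ≤ ENNReal.ofReal (f (x, y)) := by
    intro x y hint
    have hcs : 0 < q x y ^ s := Real.rpow_pos_of_pos (hqpos x y) s
    have hnn : 0 ≤ᵐ[PX] fun x' => q x' y ^ s :=
      ae_of_all _ fun x' => (Real.rpow_pos_of_pos (hqpos x' y) s).le
    have hgy : 0 < g y := by
      rw [hg]
      refine (integral_pos_iff_support_of_nonneg_ae hnn hint).mpr ?_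
      have hsupp : Function.support (fun x' => q x' y ^ s) = Set.univ := by
        ext x'
        simp [Function.support, (Real.rpow_pos_of_pos (hqpos x' y) s).ne']
      rw [hsupp]
      simp
    have hqym : Measurable fun x' => q x' y := hq.comp (measurable_id.prodMk measurable_const)
    have hset : MeasurableSet {x' : 𝒳 | q x y ≤ q x' y} :=
      measurableSet_le measurable_const hqym
    -- Chernoff / Markov bound
    have markov : PX {x' | q x y ≤ q x' y} ≤ ENNReal.ofReal (g y / q x y ^ s) := by
      have hsub : {x' | q x y ≤ q x' y} ⊆
          {x' | ENNReal.ofReal (q x y ^ s) ≤ ENNReal.ofReal (q x' y ^ s)} := fun x' hx' =>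
        ENNReal.ofReal_le_ofReal (Real.rpow_le_rpow (hqpos x y).le hx' hs)
      have hmeas : AEMeasurable (fun x' => ENNReal.ofReal (q x' y ^ s)) PX :=
        ((hqym.pow measurable_const).ennreal_ofReal).aemeasurable
      calc PX {x' | q x y ≤ q x' y}
          ≤ PX {x' | ENNReal.ofReal (q x y ^ s) ≤ ENNReal.ofReal (q x' y ^ s)} :=
            measure_mono hsub
        _ ≤ (∫⁻ x', ENNReal.ofReal (q x' y ^ s) ∂PX) / ENNReal.ofReal (q x y ^ s) :=
            meas_ge_le_lintegral_div hmeas (by simp [hcs]) ENNReal.ofReal_ne_top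
        _ = ENNReal.ofReal (g y) / ENNReal.ofReal (q x y ^ s) := by
            rw [hg, ofReal_integral_eq_lintegral_ofReal hint hnn]
        _ = ENNReal.ofReal (g y / q x y ^ s) := (ENNReal.ofReal_div_of_pos hcs).symm
    -- union bound
    have union : PZ (Prod.mk (x,y) ⁻¹' S) ≤ ((M - 1 : ℕ) : ENNReal) * PX {x' | q x y ≤ q x' y} := by
      have hrw : Prod.mk (x,y) ⁻¹' S
          = ⋃ m, (fun z : Fin (M-1) → 𝒳 => z m) ⁻¹' {x' | q x y ≤ q x' y} := by
        ext z; simp [hSdef]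
      rw [hrw]
      refine (measure_iUnion_le _).trans (le_of_eq ?_)
      have heach : ∀ m : Fin (M-1),
          PZ ((fun z : Fin (M-1) → 𝒳 => z m) ⁻¹' {x' | q x y ≤ q x' y})
          = PX {x' | q x y ≤ q x' y} := by
        intro m
        rw [hPZdef, Measure.map_apply hZ ((measurable_pi_apply m) hset)]
        have hpre : Z ⁻¹' ((fun z => z m) ⁻¹' {x' | q x y ≤ q x' y})
            = Xbar m ⁻¹' {x' | q x y ≤ q x' y} := rfl
        rw [hpre, ← Measure.map_apply (hXbarMeas m) hset, (hIdent m).map_eq]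
      simp only [heach]
      rw [tsum_fintype, Finset.sum_const, Finset.card_univ, Fintype.card_fin, nsmul_eq_mul]
    have hle1 : PZ (Prod.mk (x,y) ⁻¹' S) ≤ 1 := prob_le_one
    have combined : PZ (Prod.mk (x,y) ⁻¹' S)
        ≤ min 1 (((M - 1 : ℕ) : ENNReal) * ENNReal.ofReal (g y / q x y ^ s)) :=
      le_min hle1 (union.trans (mul_le_mul_right markov _))
    refine combined.trans (le_of_eq ?_)
    -- arithmetic: the min equals the exponential expression
    have hdivpos : 0 < q x y ^ s / g y := div_pos hcs hgy
    have hM0 : (0:ℝ) < (M:ℝ) - 1 := lt_of_lt_of_le one_pos hM1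
    have hreal : f (x,y) = min 1 (((M:ℝ)-1) * (g y / q x y ^ s)) := by
      have h2 : 0 < g y / q x y ^ s := div_pos hgy hcs
      simp only [hfdef]
      rcases le_total (Real.log (q x y ^ s / g y) - Real.log ((M:ℝ)-1)) 0 with ht | ht
      · have hle : q x y ^ s / g y ≤ (M:ℝ)-1 :=
          (Real.log_le_log_iff hdivpos hM0).mp (by linarith)
        have hge : 1 ≤ ((M:ℝ)-1) * (g y / q x y ^ s) := by
          calc (1:ℝ) = (q x y ^ s / g y) * (g y / q x y ^ s) := by field_simp
            _ ≤ ((M:ℝ)-1) * (g y / q x y ^ s) := mul_le_mul_of_nonneg_right hle h2.le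
        rw [max_eq_left ht, neg_zero, Real.exp_zero, min_eq_left hge]
      · have hle : (M:ℝ)-1 ≤ q x y ^ s / g y :=
          (Real.log_le_log_iff hM0 hdivpos).mp (by linarith)
        have hle1' : ((M:ℝ)-1) * (g y / q x y ^ s) ≤ 1 := by
          calc ((M:ℝ)-1) * (g y / q x y ^ s)
              ≤ (q x y ^ s / g y) * (g y / q x y ^ s) :=
                mul_le_mul_of_nonneg_right hle h2.le
            _ = 1 := by field_simp
        rw [max_eq_right ht, min_eq_right hle1', neg_sub, Real.exp_sub,
          Real.exp_log hM0, Real.exp_log hdivpos, div_div_eq_mul_div, mul_div_assoc]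
    rw [hreal]
    have hmono : Monotone ENNReal.ofReal := fun a b h => ENNReal.ofReal_le_ofReal h
    rw [hmono.map_min, ENNReal.ofReal_one,
      ENNReal.ofReal_mul hM0.le, ← hMcast, ENNReal.ofReal_natCast]
  -- put everything together
  have hlin : ∫⁻ ω, ENNReal.ofReal (f (W ω)) ∂μ = ENNReal.ofReal (∫ ω, f (W ω) ∂μ) :=
    (ofReal_integral_eq_lintegral_ofReal hfint (ae_of_all _ fun ω => (hfpos _).le)).symm
  have main : μ {ω | ∃ m : Fin (M-1), q (Xbar m ω) (Y ω) ≥ q (X ω) (Y ω)}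
      ≤ ENNReal.ofReal (∫ ω, f (W ω) ∂μ) := by
    rw [hA, hμA, ← hlin]
    refine lintegral_mono_ae ?_
    filter_upwards [haeInt] with ω hω
    exact key (X ω) (Y ω) hω
  calc (μ {ω | ∃ m : Fin (M-1), q (Xbar m ω) (Y ω) ≥ q (X ω) (Y ω)}).toReal
      ≤ (ENNReal.ofReal (∫ ω, f (W ω) ∂μ)).toReal :=
        ENNReal.toReal_mono ENNReal.ofReal_ne_top main
    _ = ∫ ω, f (W ω) ∂μ :=
        ENNReal.toReal_ofReal (integral_nonneg fun ω => (hfpos _).le)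
end

section
/- Let 𝒳 and 𝒴 be measurable spaces, K a Markov kernel from 𝒳 to 𝒴, P a probability measure on 𝒳, q : 𝒳 × 𝒴 → (0, ∞) a jointly measurable decoding metric, s ≥ 0, and M ≥ 2 an integer. For a codebook c : {1, …, M} → 𝒳 define the (pessimistic, maximum-metric-decoder) average error probability ε(c) = (1/M) Σ_{m=1}^{M} K(c_m)({ y : ∃ m' ≠ m, q(c_{m'}, y) ≥ q(c_m, y) }). Assume i_s(x, y) := log( q(x, y)^s / ∫_𝒳 q(x̄, y)^s dP(x̄) ) is well defined (the integral is finite) for P⊗K-almost every (x, y). Then there exists a codebook c such that ε(c) ≤ ∫_𝒳 ∫_𝒴 exp( − max{0, i_s(x, y) − log(M−1)} ) dK(x)(y) dP(x). -/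
open MeasureTheory ProbabilityTheory
open scoped ProbabilityTheory ENNReal

lemma rcus_exp_max (a : ℝ) : Real.exp (-(max 0 a)) = min 1 (Real.exp (-a)) := by
  rcases le_total 0 a with h | h
  · rw [max_eq_right h, min_eq_right]
    exact Real.exp_le_one_iff.2 (neg_nonpos.2 h)
  · rw [max_eq_left h, min_eq_left]
    · simp
    · rw [Real.one_le_exp_iff]; linarith

lemma rcus_pi_eval {ι : Type*} [Fintype ι] {α : Type*} [MeasurableSpace α]
    (P : Measure α) [IsProbabilityMeasure P] (j : ι) (s : Set α) :
    Measure.pi (fun _ : ι => P) {r | r j ∈ s} = P s := by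
  classical
  have h : {r : ι → α | r j ∈ s} = Set.pi Set.univ (Function.update (fun _ => Set.univ) j s) := by
    ext r
    simp only [Set.mem_setOf_eq, Set.mem_pi, Set.mem_univ, forall_true_left, Function.update_apply]
    constructor
    · intro hr i; split
      · next hij => subst hij; exact hr
      · exact Set.mem_univ _
    · intro hr; have := hr j; simpa using this
  rw [h, Measure.pi_pi]
  rw [Fintype.prod_eq_single j (fun i hi => by rw [Function.update_of_ne hi]; exact measure_univ)]
  rw [Function.update_self]

lemma rcus_chernoff {𝒳 : Type*} [MeasurableSpace 𝒳] (P : Measure 𝒳)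
    (f : 𝒳 → ℝ) (hf : Measurable f)
    (a : ℝ) (ha : 0 < a) (s : ℝ) (hs : 0 ≤ s) :
    P {x' | a ≤ f x'} ≤ (∫⁻ x', ENNReal.ofReal (f x' ^ s) ∂P) / ENNReal.ofReal (a ^ s) := by
  have hc0 : ENNReal.ofReal (a ^ s) ≠ 0 := by
    simp only [ne_eq, ENNReal.ofReal_eq_zero, not_le]
    exact Real.rpow_pos_of_pos ha s
  have hmeas : MeasurableSet {x' | a ≤ f x'} := measurableSet_le measurable_const hf
  rw [ENNReal.le_div_iff_mul_le (Or.inl hc0) (Or.inl ENNReal.ofReal_ne_top)]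
  calc P {x' | a ≤ f x'} * ENNReal.ofReal (a ^ s)
      = ∫⁻ _ in {x' | a ≤ f x'}, ENNReal.ofReal (a ^ s) ∂P := by
        rw [setLIntegral_const, mul_comm]
    _ ≤ ∫⁻ x' in {x' | a ≤ f x'}, ENNReal.ofReal (f x' ^ s) ∂P :=
        setLIntegral_mono' hmeas fun x' hx' =>
          ENNReal.ofReal_le_ofReal (Real.rpow_le_rpow ha.le hx' hs)
    _ ≤ ∫⁻ x', ENNReal.ofReal (f x' ^ s) ∂P := setLIntegral_le_lintegral _ _

lemma rcus_min_eq {𝒳 : Type*} [MeasurableSpace 𝒳] (P : Measure 𝒳) [IsProbabilityMeasure P]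
    (g : 𝒳 → ℝ) (hgpos : ∀ x, 0 < g x) (hgint : Integrable g P)
    (b : ℝ) (hb : 0 < b) (n : ℕ) (hn : 1 ≤ n) :
    min 1 ((n : ℝ≥0∞) * ((∫⁻ x', ENNReal.ofReal (g x') ∂P) / ENNReal.ofReal b)) =
      ENNReal.ofReal (Real.exp (-(max 0 (Real.log (b / ∫ x', g x' ∂P) - Real.log n)))) := by
  set I := ∫ x', g x' ∂P with hIdef
  have hI0 : 0 ≤ I := integral_nonneg fun x => (hgpos x).le
  have hI : 0 < I := by
    rcases hI0.lt_or_eq with h | h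
    · exact h
    · exfalso
      have h1 := (integral_eq_zero_iff_of_nonneg (fun x => (hgpos x).le) hgint).1 h.symm
      have h2 : P {x | ¬ (g x = 0)} = 0 := ae_iff.1 h1
      have h3 : {x | ¬ (g x = 0)} = Set.univ := by
        ext x; simp [(hgpos x).ne']
      rw [h3] at h2
      simp at h2
  have hlint : ∫⁻ x', ENNReal.ofReal (g x') ∂P = ENNReal.ofReal I :=
    (ofReal_integral_eq_lintegral_ofReal hgint (ae_of_all _ fun x => (hgpos x).le)).symm
  have hn0 : (0:ℝ) < n := by exact_mod_cast hn
  have hexp : Real.exp (-(max 0 (Real.log (b / I) - Real.log n)))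
      = min 1 ((n : ℝ) * (I / b)) := by
    rw [rcus_exp_max]
    congr 1
    rw [neg_sub, Real.exp_sub, Real.exp_log hn0, Real.exp_log (div_pos hb hI)]
    rw [div_div_eq_mul_div]
    ring_nf
  rw [hexp, hlint, ← ENNReal.ofReal_div_of_pos hb]
  have hmono : Monotone ENNReal.ofReal := fun _ _ h => ENNReal.ofReal_le_ofReal h
  rw [hmono.map_min]
  congr 1
  · simp
  · rw [ENNReal.ofReal_mul hn0.le, ENNReal.ofReal_natCast]

/-- Code-existence form of the RCUs bound (Theorem 1 of the paper): for a channel given by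
a Markov kernel `K`, an input distribution `P`, a decoding metric `q` and a parameter `s ≥ 0`,
there exists a codebook `c` of `M` codewords whose average error probability, under the
pessimistic maximum-metric decoder, is at most
`∫∫ exp(−[i_s(x,y) − log(M−1)]⁺) dK(x)(y) dP(x)`, where
`i_s(x,y) = log(q(x,y)^s / ∫ q(x̄,y)^s dP(x̄))` is the generalized information density. -/
theorem rcus_bound_code_existence
    {𝒳 𝒴 : Type*} [MeasurableSpace 𝒳] [MeasurableSpace 𝒴]
    (K : Kernel 𝒳 𝒴) [IsMarkovKernel K]
    (P : Measure 𝒳) [IsProbabilityMeasure P]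
    (q : 𝒳 → 𝒴 → ℝ) (hq : Measurable fun p : 𝒳 × 𝒴 => q p.1 p.2)
    (hqpos : ∀ x y, 0 < q x y)
    (s : ℝ) (hs : 0 ≤ s)
    (M : ℕ) (hM : 2 ≤ M)
    (hint : ∀ᵐ p ∂(P ⊗ₘ K), Integrable (fun x' => q x' p.2 ^ s) P)
    (ε : (Fin M → 𝒳) → ℝ)
    (hε : ∀ c : Fin M → 𝒳, ε c =
      (1 / (M : ℝ)) * ∑ m : Fin M,
        (K (c m) {y | ∃ m' : Fin M, m' ≠ m ∧ q (c m') y ≥ q (c m) y}).toReal)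
    (i_s : 𝒳 → 𝒴 → ℝ)
    (hi_s : ∀ x y, i_s x y = Real.log (q x y ^ s / ∫ x', q x' y ^ s ∂P)) :
    ∃ c : Fin M → 𝒳,
      ε c ≤ ∫ x, ∫ y, Real.exp (-(max 0 (i_s x y - Real.log ((M : ℝ) - 1)))) ∂(K x) ∂P := by
  classical
  obtain ⟨n, rfl⟩ : ∃ n, M = n + 1 := ⟨M - 1, by omega⟩
  have hn1 : 1 ≤ n := by omega
  -- notation
  set gB : 𝒳 → 𝒴 → ℝ := fun x y => Real.exp (-(max 0 (i_s x y - Real.log (((n+1 : ℕ) : ℝ) - 1))))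
    with hgBdef
  set B : ℝ := ∫ x, ∫ y, gB x y ∂(K x) ∂P with hBdef
  -- basic measurability
  have hqs : Measurable fun p : 𝒳 × 𝒴 => q p.1 p.2 ^ s := by fun_prop
  have hIy : Measurable fun y => ∫ x', q x' y ^ s ∂P := by
    have : StronglyMeasurable fun p : 𝒴 × 𝒳 => q p.2 p.1 ^ s :=
      (hqs.comp measurable_swap).stronglyMeasurable
    exact this.integral_prod_right'.measurable
  have hNy : Measurable fun y => ∫⁻ x', ENNReal.ofReal (q x' y ^ s) ∂P := by
    have : Measurable fun p : 𝒴 × 𝒳 => ENNReal.ofReal (q p.2 p.1 ^ s) :=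
      ENNReal.measurable_ofReal.comp (hqs.comp measurable_swap)
    exact this.lintegral_prod_right'
  have hi_smeas : Measurable fun p : 𝒳 × 𝒴 => i_s p.1 p.2 := by
    have : (fun p : 𝒳 × 𝒴 => i_s p.1 p.2) =
        fun p => Real.log (q p.1 p.2 ^ s / ∫ x', q x' p.2 ^ s ∂P) := by
      funext p; exact hi_s p.1 p.2
    rw [this]
    exact (hqs.div (hIy.comp measurable_snd)).log
  have hgBmeas : Measurable fun p : 𝒳 × 𝒴 => gB p.1 p.2 := by
    apply Real.measurable_exp.comp
    exact ((measurable_const.max (hi_smeas.sub measurable_const))).neg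
  have hgBpos : ∀ x y, 0 < gB x y := fun x y => Real.exp_pos _
  have hgBle1 : ∀ x y, gB x y ≤ 1 := fun x y => by
    rw [hgBdef]
    exact Real.exp_le_one_iff.2 (neg_nonpos.2 (le_max_left _ _))

  -- setup
  set μ : Measure (Fin (n+1) → 𝒳) := Measure.pi (fun _ => P) with hμdef
  set W : 𝒳 → 𝒴 → ℝ≥0∞ := fun x y =>
    (∫⁻ x', ENNReal.ofReal (q x' y ^ s) ∂P) / ENNReal.ofReal (q x y ^ s) with hWdef
  set BL : ℝ≥0∞ := ∫⁻ x, ∫⁻ y, min 1 ((n : ℝ≥0∞) * W x y) ∂(K x) ∂P with hBLdef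
  have hWmeas : Measurable fun p : 𝒳 × 𝒴 => W p.1 p.2 :=
    (hNy.comp measurable_snd).div (ENNReal.measurable_ofReal.comp hqs)
  -- measurability of the error probability of message m
  have hA : ∀ m : Fin (n+1), Measurable fun c : Fin (n+1) → 𝒳 =>
      K (c m) {y | ∃ m' : Fin (n+1), m' ≠ m ∧ q (c m') y ≥ q (c m) y} := by
    intro m
    set κ := K.comap (fun c : Fin (n+1) → 𝒳 => c m) (measurable_pi_apply m) with hκdef
    set t : Set ((Fin (n+1) → 𝒳) × 𝒴) :=
      {p | ∃ m' : Fin (n+1), m' ≠ m ∧ q (p.1 m') p.2 ≥ q (p.1 m) p.2} with htdef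
    have ht : MeasurableSet t := by
      have h2 : t = ⋃ (m' : Fin (n+1)) (_ : m' ≠ m),
          {p : (Fin (n+1) → 𝒳) × 𝒴 | q (p.1 m) p.2 ≤ q (p.1 m') p.2} := by
        ext p
        simp only [htdef, Set.mem_setOf_eq, Set.mem_iUnion, ge_iff_le]
        tauto
      rw [h2]
      refine MeasurableSet.iUnion fun m' => MeasurableSet.iUnion fun _ => ?_
      exact measurableSet_le (by fun_prop) (by fun_prop)
    have h3 := Kernel.measurable_kernel_prodMk_left (κ := κ) ht
    have h4 : ∀ c : Fin (n+1) → 𝒳, κ c (Prod.mk c ⁻¹' t)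
        = K (c m) {y | ∃ m' : Fin (n+1), m' ≠ m ∧ q (c m') y ≥ q (c m) y} := by
      intro c
      rw [hκdef, Kernel.comap_apply]
      rfl
    simpa only [h4] using h3
  -- Step I : averaged error of message m is bounded by BL
  have stepI : ∀ m : Fin (n+1),
      ∫⁻ c, K (c m) {y | ∃ m' : Fin (n+1), m' ≠ m ∧ q (c m') y ≥ q (c m) y} ∂μ ≤ BL := by
    intro m
    set F : (Fin (n+1) → 𝒳) → ℝ≥0∞ := fun c =>
      K (c m) {y | ∃ m' : Fin (n+1), m' ≠ m ∧ q (c m') y ≥ q (c m) y} with hFdef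
    set π : Measure (Fin n → 𝒳) := Measure.pi (fun _ => P) with hπdef
    set e := MeasurableEquiv.piFinSuccAbove (fun _ : Fin (n+1) => 𝒳) m with hedef
    have hmp : MeasurePreserving e μ (P.prod π) :=
      measurePreserving_piFinSuccAbove (fun _ => P) m
    have hmp' : MeasurePreserving e.symm (P.prod π) μ := hmp.symm e
    have hApre : ∫⁻ c, F c ∂μ = ∫⁻ z, F (e.symm z) ∂(P.prod π) := (hmp'.lintegral_comp (hA m)).symm
    have hprod : ∫⁻ z, F (e.symm z) ∂(P.prod π) = ∫⁻ x, ∫⁻ r, F (e.symm (x, r)) ∂π ∂P :=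
      MeasureTheory.lintegral_prod _ ((hA m).comp e.symm.measurable).aemeasurable
    have key_x : ∀ x : 𝒳, ∫⁻ r, F (e.symm (x, r)) ∂π ≤ ∫⁻ y, min 1 ((n:ℝ≥0∞) * W x y) ∂(K x) := by
      intro x
      set T : Fin n → Set ((Fin n → 𝒳) × 𝒴) := fun j => {p | q x p.2 ≤ q (p.1 j) p.2} with hTdef
      have hT : ∀ j, MeasurableSet (T j) :=
        fun j => measurableSet_le (by fun_prop) (by fun_prop)
      set H : (Fin n → 𝒳) → 𝒴 → ℝ≥0∞ :=
        fun r y => min 1 (∑ j : Fin n, (T j).indicator 1 (r, y)) with hHdef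
      have hHmeas : Measurable fun p : (Fin n → 𝒳) × 𝒴 => H p.1 p.2 := by
        apply Measurable.min measurable_const
        exact Finset.measurable_sum _ fun j _ => measurable_one.indicator (hT j)
      have hc1 : ∀ r : Fin n → 𝒳, F (e.symm (x, r)) ≤ ∫⁻ y, H r y ∂(K x) := by
        intro r
        set cc : Fin (n+1) → 𝒳 := e.symm (x, r) with hccdef
        have hc : cc = m.insertNth x r := by
          simp [hccdef, hedef, MeasurableEquiv.piFinSuccAbove_symm_apply, Fin.insertNthEquiv]
        have hccm : cc m = x := by rw [hc]; simp
        have hccj : ∀ j : Fin n, cc (m.succAbove j) = r j := fun j => by rw [hc]; simp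
        rw [hFdef]
        simp only [hccm]
        have hEmeas : MeasurableSet
            {y | ∃ m' : Fin (n+1), m' ≠ m ∧ q (cc m') y ≥ q x y} := by
          have h2 : {y | ∃ m' : Fin (n+1), m' ≠ m ∧ q (cc m') y ≥ q x y}
              = ⋃ (m' : Fin (n+1)) (_ : m' ≠ m), {y | q x y ≤ q (cc m') y} := by
            ext y
            simp only [Set.mem_setOf_eq, Set.mem_iUnion, ge_iff_le]
            tauto
          rw [h2]
          refine MeasurableSet.iUnion fun m' => MeasurableSet.iUnion fun _ => ?_
          exact measurableSet_le (by fun_prop) (by fun_prop)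
        rw [← lintegral_indicator_one hEmeas]
        refine lintegral_mono fun y => ?_
        by_cases hy : y ∈ {y | ∃ m' : Fin (n+1), m' ≠ m ∧ q (cc m') y ≥ q x y}
        · have hy2 := hy
          obtain ⟨m', hne, hqq⟩ := hy2
          obtain ⟨j, hj⟩ := Fin.exists_succAbove_eq hne
          rw [Set.indicator_of_mem hy]
          refine le_min le_rfl ?_
          have hmem : (r, y) ∈ T j := by
            simp only [hTdef, Set.mem_setOf_eq]
            rw [← hccj j, hj]
            exact hqq
          calc (1:ℝ≥0∞) = (T j).indicator 1 (r, y) := by rw [Set.indicator_of_mem hmem]; rfl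
            _ ≤ ∑ j' : Fin n, (T j').indicator 1 (r, y) :=
                Finset.single_le_sum (f := fun j' => (T j').indicator 1 (r, y))
                  (fun _ _ => zero_le) (Finset.mem_univ j)
        · rw [Set.indicator_of_notMem hy]
          exact zero_le
      calc ∫⁻ r, F (e.symm (x, r)) ∂π ≤ ∫⁻ r, ∫⁻ y, H r y ∂(K x) ∂π := lintegral_mono hc1
        _ = ∫⁻ y, ∫⁻ r, H r y ∂π ∂(K x) := lintegral_lintegral_swap hHmeas.aemeasurable
        _ ≤ ∫⁻ y, min 1 ((n:ℝ≥0∞) * W x y) ∂(K x) := by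
            refine lintegral_mono fun y => ?_
            have h1 : ∫⁻ r, H r y ∂π ≤ 1 := by
              calc ∫⁻ r, H r y ∂π ≤ ∫⁻ _, 1 ∂π := lintegral_mono fun r => min_le_left _ _
                _ = 1 := by simp
            have h2 : ∫⁻ r, H r y ∂π ≤ (n:ℝ≥0∞) * W x y := by
              calc ∫⁻ r, H r y ∂π
                  ≤ ∫⁻ r, ∑ j : Fin n, (T j).indicator 1 (r, y) ∂π :=
                    lintegral_mono fun r => min_le_right _ _
                _ = ∑ j : Fin n, ∫⁻ r, (T j).indicator 1 (r, y) ∂π :=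
                    lintegral_finset_sum _ fun j _ =>
                      (measurable_one.indicator (hT j)).comp measurable_prodMk_right
                _ = ∑ _j : Fin n, P {x' | q x y ≤ q x' y} := by
                    refine Finset.sum_congr rfl fun j _ => ?_
                    have hind : ∀ r : Fin n → 𝒳, (T j).indicator 1 (r, y)
                        = ({r : Fin n → 𝒳 | r j ∈ {x' | q x y ≤ q x' y}}).indicator
                          (1 : (Fin n → 𝒳) → ℝ≥0∞) r := by
                      intro r
                      by_cases hr : (r, y) ∈ T j
                      · rw [Set.indicator_of_mem hr, Set.indicator_of_mem
                          (show r ∈ {r : Fin n → 𝒳 | r j ∈ {x' | q x y ≤ q x' y}} from hr)]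
                        rfl
                      · rw [Set.indicator_of_notMem hr, Set.indicator_of_notMem
                          (show r ∉ {r : Fin n → 𝒳 | r j ∈ {x' | q x y ≤ q x' y}} from hr)]
                    simp_rw [hind]
                    rw [lintegral_indicator_one, rcus_pi_eval P j]
                    exact measurable_pi_apply j (measurableSet_le (by fun_prop) (by fun_prop))
                _ ≤ ∑ _j : Fin n, W x y := by
                    refine Finset.sum_le_sum fun j _ => ?_
                    exact rcus_chernoff P (fun x' => q x' y) (by fun_prop) (q x y) (hqpos x y) s hs
                _ = (n:ℝ≥0∞) * W x y := by
                    rw [Finset.sum_const, Finset.card_univ, Fintype.card_fin, nsmul_eq_mul]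
            exact le_min h1 h2
    calc ∫⁻ c, F c ∂μ = ∫⁻ x, ∫⁻ r, F (e.symm (x, r)) ∂π ∂P := by rw [hApre, hprod]
      _ ≤ ∫⁻ x, ∫⁻ y, min 1 ((n:ℝ≥0∞) * W x y) ∂(K x) ∂P := lintegral_mono key_x
  -- Step II : identify BL with ofReal B
  have hBLB : BL = ENNReal.ofReal B := by
    have hminmeas : Measurable fun p : 𝒳 × 𝒴 => min 1 ((n:ℝ≥0∞) * W p.1 p.2) :=
      measurable_const.min (measurable_const.mul hWmeas)
    have hBL2 : BL = ∫⁻ p, min 1 ((n:ℝ≥0∞) * W p.1 p.2) ∂(P ⊗ₘ K) :=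
      (Measure.lintegral_compProd hminmeas).symm
    have hae : ∀ᵐ p ∂(P ⊗ₘ K),
        min 1 ((n:ℝ≥0∞) * W p.1 p.2) = ENNReal.ofReal (gB p.1 p.2) := by
      filter_upwards [hint] with p hp
      have hmain := rcus_min_eq P (fun x' => q x' p.2 ^ s)
        (fun x' => Real.rpow_pos_of_pos (hqpos x' p.2) s) hp
        (q p.1 p.2 ^ s) (Real.rpow_pos_of_pos (hqpos p.1 p.2) s) n hn1
      rw [hWdef]
      rw [hmain, hgBdef]
      congr 2
      rw [hi_s p.1 p.2]
      congr 2
      push_cast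
      ring_nf
    have hgBint : Integrable (fun p : 𝒳 × 𝒴 => gB p.1 p.2) (P ⊗ₘ K) := by
      refine Integrable.mono' (integrable_const 1) hgBmeas.aestronglyMeasurable ?_
      exact ae_of_all _ fun p => by
        rw [Real.norm_eq_abs, abs_of_pos (hgBpos _ _)]; exact hgBle1 _ _
    rw [hBL2, lintegral_congr_ae hae,
      ← ofReal_integral_eq_lintegral_ofReal hgBint (ae_of_all _ fun p => (hgBpos _ _).le),
      hBdef, ← Measure.integral_compProd hgBint]
  -- Step III : conclude by the first moment method
  have hεoR : ∀ c : Fin (n+1) → 𝒳, ENNReal.ofReal (ε c)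
      = (((n+1:ℕ)) : ℝ≥0∞)⁻¹ * ∑ m : Fin (n+1),
        K (c m) {y | ∃ m' : Fin (n+1), m' ≠ m ∧ q (c m') y ≥ q (c m) y} := by
    intro c
    rw [hε c, ENNReal.ofReal_mul (by positivity)]
    congr 1
    · rw [one_div, ENNReal.ofReal_inv_of_pos (by positivity), ENNReal.ofReal_natCast]
    · rw [ENNReal.ofReal_sum_of_nonneg (fun m _ => ENNReal.toReal_nonneg)]
      exact Finset.sum_congr rfl fun m _ => ENNReal.ofReal_toReal (measure_ne_top _ _)
  have hKey : ∫⁻ c, ENNReal.ofReal (ε c) ∂μ ≤ ENNReal.ofReal B := by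
    calc ∫⁻ c, ENNReal.ofReal (ε c) ∂μ
        = (((n+1:ℕ)) : ℝ≥0∞)⁻¹ * ∑ m : Fin (n+1), ∫⁻ c,
            K (c m) {y | ∃ m' : Fin (n+1), m' ≠ m ∧ q (c m') y ≥ q (c m) y} ∂μ := by
          simp_rw [hεoR]
          rw [lintegral_const_mul _ (Finset.measurable_sum _ fun m _ => hA m),
            lintegral_finset_sum _ fun m _ => hA m]
      _ ≤ (((n+1:ℕ)) : ℝ≥0∞)⁻¹ * ∑ _m : Fin (n+1), BL := by
          gcongr with m _
          exact stepI m
      _ = BL := by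
          rw [Finset.sum_const, Finset.card_univ, Fintype.card_fin, nsmul_eq_mul, ← mul_assoc,
            ENNReal.inv_mul_cancel (by simp) (by simp), one_mul]
      _ = ENNReal.ofReal B := hBLB
  have hεmeas' : Measurable fun c => ENNReal.ofReal (ε c) := by
    have h5 : ε = fun c => (1 / ((n+1:ℕ) : ℝ)) * ∑ m : Fin (n+1),
        (K (c m) {y | ∃ m' : Fin (n+1), m' ≠ m ∧ q (c m') y ≥ q (c m) y}).toReal := funext hε
    rw [h5]
    exact ENNReal.measurable_ofReal.comp
      (measurable_const.mul (Finset.measurable_sum _ fun m _ => (hA m).ennreal_toReal))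
  obtain ⟨c, hc⟩ := exists_le_lintegral (μ := μ) hεmeas'.aemeasurable
  refine ⟨c, ?_⟩
  have hB0 : 0 ≤ B := integral_nonneg fun x => integral_nonneg fun y => (hgBpos x y).le
  have hfin := hc.trans hKey
  rwa [ENNReal.ofReal_le_ofReal_iff hB0] at hfin
end

section
/- Let X and Y be random variables taking values in measurable spaces 𝒳 and 𝒴 respectively, let M ≥ 2 be an integer, and let X̄₁, …, X̄_{M−1} be i.i.d. random variables each distributed as X and jointly independent of the pair (X, Y). Let q : 𝒳 × 𝒴 → (0, ∞) be a jointly measurable decoding metric. Then Pr[∃ m ∈ {1, …, M−1} : q(X̄_m, Y) ≥ q(X, Y)] ≤ E[ min{ 1, (M−1) · Pr[ q(X̄₁, Y) ≥ q(X, Y) | X, Y ] } ]. -/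
open MeasureTheory ProbabilityTheory

/-- The random-coding union (RCU) bound: the probability that at least one of `M - 1`
i.i.d. alternative codewords `X̄₁, …, X̄_{M−1}` (each distributed as `X` and jointly independent
of `(X, Y)`) achieves a decoding metric at least as large as that of the transmitted codeword
is bounded by `E[min{1, (M−1) · Pr[q(X̄₁, Y) ≥ q(X, Y) | X, Y]}]`, where the conditional
probability given `(X, Y)` is the conditional expectation of the indicator of the pairwise
error event with respect to the σ-algebra generated by `(X, Y)`. -/
theorem rcu_bound
    {Ω 𝒳 𝒴 : Type*} [MeasurableSpace Ω] [MeasurableSpace 𝒳] [MeasurableSpace 𝒴]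
    (μ : Measure Ω) [IsProbabilityMeasure μ]
    (X : Ω → 𝒳) (Y : Ω → 𝒴) (hX : Measurable X) (hY : Measurable Y)
    (M : ℕ) (hM : 2 ≤ M)
    (Xbar : Fin (M - 1) → Ω → 𝒳) (hXbarMeas : ∀ m, Measurable (Xbar m))
    (hIdent : ∀ m, IdentDistrib (Xbar m) X μ μ)
    (hIndepFam : iIndepFun Xbar μ)
    (hIndepXY : IndepFun (fun ω m => Xbar m ω) (fun ω => (X ω, Y ω)) μ)
    (q : 𝒳 → 𝒴 → ℝ) (hq : Measurable fun p : 𝒳 × 𝒴 => q p.1 p.2)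
    (hqpos : ∀ x y, 0 < q x y) :
    (μ {ω | ∃ m : Fin (M - 1), q (Xbar m ω) (Y ω) ≥ q (X ω) (Y ω)}).toReal ≤
      ∫ ω, min 1 (((M : ℝ) - 1) *
        (μ[Set.indicator {ω' | q (Xbar ⟨0, by omega⟩ ω') (Y ω') ≥ q (X ω') (Y ω')}
            (fun _ => (1 : ℝ)) |
          MeasurableSpace.comap (fun ω' => (X ω', Y ω')) inferInstance]) ω) ∂μ := by
  classical
  set Z : Ω → 𝒳 × 𝒴 := fun ω => (X ω, Y ω) with hZdef
  have hZ : Measurable Z := hX.prodMk hY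
  have hm := hZ.comap_le
  haveI : SigmaFinite (μ.trim hm) := by
    have : IsFiniteMeasure (μ.trim hm) := isFiniteMeasure_trim hm
    infer_instance
  set A : Fin (M - 1) → Set Ω :=
    fun m => {ω | q (Xbar m ω) (Y ω) ≥ q (X ω) (Y ω)} with hAdef
  have hA : ∀ m, MeasurableSet (A m) := fun m =>
    measurableSet_le (hq.comp (hX.prodMk hY)) (hq.comp ((hXbarMeas m).prodMk hY))
  set m₀ : Fin (M - 1) := ⟨0, by omega⟩ with hm₀
  -- independence of each Xbar m from Z
  have hIndep : ∀ m, IndepFun (Xbar m) Z μ := fun m => by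
    have := hIndepXY.comp (φ := fun g : Fin (M-1) → 𝒳 => g m) (ψ := id)
      (measurable_pi_apply (X := fun _ : Fin (M-1) => 𝒳) m) measurable_id
    exact this
  -- joint laws of (Xbar m, Z) coincide for all m
  have hmap : ∀ m, μ.map (fun ω => (Xbar m ω, Z ω)) = (μ.map X).prod (μ.map Z) := fun m => by
    rw [← (hIdent m).map_eq]
    exact ((indepFun_iff_map_prod_eq_prod_map_map (hXbarMeas m).aemeasurable
      hZ.aemeasurable).1 (hIndep m))
  -- equal measures on sets (A m) ∩ Z⁻¹' B
  have hmeas_eq : ∀ m, ∀ B : Set (𝒳 × 𝒴), MeasurableSet B →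
      μ (Z ⁻¹' B ∩ A m) = μ (Z ⁻¹' B ∩ A m₀) := by
    intro m B hB
    set S : Set (𝒳 × (𝒳 × 𝒴)) := {p | q p.2.1 p.2.2 ≤ q p.1 p.2.2} with hSdef
    have hS : MeasurableSet S :=
      measurableSet_le (hq.comp (measurable_snd.fst.prodMk measurable_snd.snd))
        (hq.comp (measurable_fst.prodMk measurable_snd.snd))
    have key : ∀ k : Fin (M - 1),
        Z ⁻¹' B ∩ A k = (fun ω => (Xbar k ω, Z ω)) ⁻¹' ((Set.univ ×ˢ B) ∩ S) := by
      intro k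
      ext ω
      simp [hSdef, hAdef, hZdef, Set.mem_prod, and_comm, ge_iff_le]
    have happ : ∀ k : Fin (M - 1),
        μ (Z ⁻¹' B ∩ A k) = ((μ.map X).prod (μ.map Z)) ((Set.univ ×ˢ B) ∩ S) := by
      intro k
      rw [key k, ← hmap k,
        Measure.map_apply ((hXbarMeas k).prodMk hZ) ((MeasurableSet.univ.prod hB).inter hS)]
    rw [happ m, happ m₀]
  -- step 4: conditional expectations of indicators coincide
  have hCEeq : ∀ m, (μ[Set.indicator (A m₀) (fun _ => (1 : ℝ)) | MeasurableSpace.comap Z inferInstance])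
      =ᵐ[μ] μ[Set.indicator (A m) (fun _ => (1 : ℝ)) | MeasurableSpace.comap Z inferInstance] := by
    intro m
    refine ae_eq_condExp_of_forall_setIntegral_eq hm
      ((integrable_const (1 : ℝ)).indicator (hA m))
      (fun s _ _ => integrable_condExp.integrableOn) ?_
      stronglyMeasurable_condExp.aestronglyMeasurable
    intro s hs hμs
    rw [setIntegral_condExp hm ((integrable_const (1 : ℝ)).indicator (hA m₀)) hs]
    obtain ⟨B, hB, rfl⟩ := hs
    rw [setIntegral_indicator (hA m₀), setIntegral_indicator (hA m),
      setIntegral_const, setIntegral_const, measureReal_def, measureReal_def, hmeas_eq m B hB]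
  set CE : Ω → ℝ := μ[Set.indicator (A m₀) (fun _ => (1 : ℝ)) | MeasurableSpace.comap Z inferInstance] with hCEdef
  set U : Set Ω := {ω | ∃ m : Fin (M - 1), q (Xbar m ω) (Y ω) ≥ q (X ω) (Y ω)} with hUdef
  have hUeq : U = ⋃ m, A m := by
    ext ω; simp [hUdef, hAdef]
  have hU : MeasurableSet U := by
    rw [hUeq]; exact MeasurableSet.iUnion fun m => hA m
  have hUint : Integrable (Set.indicator U (fun _ => (1 : ℝ))) μ :=
    (integrable_const (1 : ℝ)).indicator hU
  -- pointwise: indicator of union ≤ sum of indicators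
  have hptsum : Set.indicator U (fun _ => (1 : ℝ)) ≤
      fun ω => ∑ m : Fin (M - 1), Set.indicator (A m) (fun _ => (1 : ℝ)) ω := by
    intro ω
    by_cases hω : ω ∈ U
    · rw [Set.indicator_of_mem hω]
      obtain ⟨m, hmA⟩ : ∃ m, ω ∈ A m := by rw [hUeq] at hω; simpa using hω
      calc (1 : ℝ) = Set.indicator (A m) (fun _ => (1 : ℝ)) ω :=
            (Set.indicator_of_mem hmA (fun _ => (1 : ℝ))).symm
        _ ≤ ∑ k : Fin (M - 1), Set.indicator (A k) (fun _ => (1 : ℝ)) ω :=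
            Finset.single_le_sum
              (fun k _ => Set.indicator_nonneg (fun _ _ => zero_le_one) ω)
              (Finset.mem_univ m)
    · rw [Set.indicator_of_notMem hω]
      exact Finset.sum_nonneg fun k _ => Set.indicator_nonneg (fun _ _ => zero_le_one) ω
  -- conditional expectation of indicator of union is ≤ (M-1) * CE a.e.
  have hsum_int : ∀ m : Fin (M - 1), m ∈ Finset.univ →
      Integrable (Set.indicator (A m) (fun _ => (1 : ℝ))) μ :=
    fun m _ => (integrable_const (1 : ℝ)).indicator (hA m)
  have hcard : ((Finset.univ : Finset (Fin (M - 1))).card : ℝ) = (M : ℝ) - 1 := by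
    simp only [Finset.card_univ, Fintype.card_fin]
    have : (1 : ℕ) ≤ M := by omega
    push_cast [Nat.cast_sub this]
    ring
  have hle2 : μ[Set.indicator U (fun _ => (1 : ℝ)) | MeasurableSpace.comap Z inferInstance] ≤ᵐ[μ]
      fun ω => ((M : ℝ) - 1) * CE ω := by
    have h1 : μ[Set.indicator U (fun _ => (1 : ℝ)) | MeasurableSpace.comap Z inferInstance] ≤ᵐ[μ]
        μ[(∑ m : Fin (M - 1), Set.indicator (A m) (fun _ => (1 : ℝ))) | MeasurableSpace.comap Z inferInstance] :=
      condExp_mono hUint (integrable_finset_sum' _ hsum_int)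
        (Filter.Eventually.of_forall (fun ω => by
          simpa using hptsum ω))
    have h2 : μ[(∑ m : Fin (M - 1), Set.indicator (A m) (fun _ => (1 : ℝ))) | MeasurableSpace.comap Z inferInstance]
        =ᵐ[μ] ∑ m : Fin (M - 1),
          μ[Set.indicator (A m) (fun _ => (1 : ℝ)) | MeasurableSpace.comap Z inferInstance] :=
      condExp_finset_sum hsum_int _
    have h3 : (∑ m : Fin (M - 1),
        μ[Set.indicator (A m) (fun _ => (1 : ℝ)) | MeasurableSpace.comap Z inferInstance])
        =ᵐ[μ] fun ω => ((M : ℝ) - 1) * CE ω := by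
      have hall : ∀ᵐ ω ∂μ, ∀ m : Fin (M - 1),
          (μ[Set.indicator (A m) (fun _ => (1 : ℝ)) | MeasurableSpace.comap Z inferInstance]) ω = CE ω := by
        rw [ae_all_iff]
        intro m
        exact (hCEeq m).symm
      filter_upwards [hall] with ω hω
      simp only [Finset.sum_apply]
      rw [Finset.sum_congr rfl (fun m _ => hω m), Finset.sum_const, nsmul_eq_mul, hcard]
    filter_upwards [h1, h2.le, h3.le] with ω ha hb hc
    exact ha.trans (hb.trans hc)
  have hle1 : μ[Set.indicator U (fun _ => (1 : ℝ)) | MeasurableSpace.comap Z inferInstance] ≤ᵐ[μ] fun _ => (1 : ℝ) := by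
    have h1 : μ[Set.indicator U (fun _ => (1 : ℝ)) | MeasurableSpace.comap Z inferInstance] ≤ᵐ[μ]
        μ[(fun _ => (1 : ℝ)) | MeasurableSpace.comap Z inferInstance] :=
      condExp_mono hUint (integrable_const 1)
        (Filter.Eventually.of_forall
          (fun ω => Set.indicator_le_self' (fun _ _ => zero_le_one) ω))
    have h2 : μ[(fun _ => (1 : ℝ)) | MeasurableSpace.comap Z inferInstance] = fun _ => (1 : ℝ) := condExp_const hm 1
    rw [h2] at h1
    exact h1
  have hCEnonneg : 0 ≤ᵐ[μ] CE :=
    condExp_nonneg (Filter.Eventually.of_forall fun ω =>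
      Set.indicator_nonneg (fun _ _ => zero_le_one) ω)
  -- a.e. bound by the min
  have hmin : μ[Set.indicator U (fun _ => (1 : ℝ)) | MeasurableSpace.comap Z inferInstance] ≤ᵐ[μ]
      fun ω => min 1 (((M : ℝ) - 1) * CE ω) := by
    filter_upwards [hle1, hle2] with ω h1 h2
    exact le_min h1 h2
  -- integrability of the min
  have hMnonneg : (0 : ℝ) ≤ (M : ℝ) - 1 := by
    have : (2 : ℝ) ≤ (M : ℝ) := by exact_mod_cast hM
    linarith
  have hint_min : Integrable (fun ω => min 1 (((M : ℝ) - 1) * CE ω)) μ := by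
    refine Integrable.mono' (integrable_const (1 : ℝ))
      ((measurable_const.min
        (measurable_const.mul
          (stronglyMeasurable_condExp.mono hm).measurable)).aestronglyMeasurable) ?_
    filter_upwards [hCEnonneg] with ω hω
    rw [Real.norm_eq_abs, abs_le]
    constructor
    · have : (0 : ℝ) ≤ min 1 (((M : ℝ) - 1) * CE ω) :=
        le_min zero_le_one (mul_nonneg hMnonneg hω)
      linarith
    · exact min_le_left _ _
  -- conclude
  have hstart : (μ U).toReal = ∫ ω, (μ[Set.indicator U (fun _ => (1 : ℝ)) | MeasurableSpace.comap Z inferInstance]) ω ∂μ := by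
    rw [integral_condExp hm, integral_indicator hU, setIntegral_const, smul_eq_mul, mul_one, measureReal_def]
  calc (μ U).toReal
      = ∫ ω, (μ[Set.indicator U (fun _ => (1 : ℝ)) | MeasurableSpace.comap Z inferInstance]) ω ∂μ := hstart
    _ ≤ ∫ ω, min 1 (((M : ℝ) - 1) * CE ω) ∂μ :=
        integral_mono_ae integrable_condExp hint_min hmin
end
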